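/- Let θ*, θ ∈ S^{d−1}, let z = xᵀθ* and z' = xᵀθ for x a d-dimensional standard normal vector, and let p : ℝ → [0,1] satisfy p(−t) = 1 − p(t). With y satisfying P(y = 1 | x) = p(xᵀθ*), for every integer q ≥ 2 the following pointwise bound holds almost surely: |[−y xᵀθ]_+ − [−y xᵀθ*]_+|^q ≤ 2^{q−1}·1{sign(xᵀθ) ≠ sign(xᵀθ*)}·|xᵀθ|^q + 2^{q−1}·1{y ≠ sign(xᵀθ*)}·|xᵀ(θ − θ*)|^q. -/

import Mathlib

open MeasureTheory ProbabilityTheory Real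

noncomputable def stdGaussian (d : ℕ) : Measure (EuclideanSpace ℝ (Fin d)) :=
  (Measure.pi fun _ : Fin d => gaussianReal 0 1).map (EuclideanSpace.equiv (Fin d) ℝ).symm

/-- Binary response model: `x` is a standard Gaussian vector and, conditionally on
`x`, the label `y ∈ {-1,1}` satisfies `P(y = 1 | x) = p(xᵀθ)`. -/
noncomputable def binaryModel (d : ℕ) (p : ℝ → ℝ) (θ : EuclideanSpace ℝ (Fin d)) :
    Measure (EuclideanSpace ℝ (Fin d) × ℝ) :=
  (stdGaussian d).bind fun x =>
    ENNReal.ofReal (p (inner ℝ x θ : ℝ)) • Measure.dirac (x, (1:ℝ))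
      + ENNReal.ofReal (1 - p (inner ℝ x θ : ℝ)) • Measure.dirac (x, (-1:ℝ))

/-- `sign(t) = 1` if `t > 0` and `-1` otherwise. -/
noncomputable def sgn (t : ℝ) : ℝ := if 0 < t then 1 else -1

lemma key_pointwise (y a b : ℝ) (hy : y = 1 ∨ y = -1) (q : ℕ) (hq : 2 ≤ q) :
    |max (-y * a) 0 - max (-y * b) 0| ^ q ≤
      2 ^ (q - 1) * (if sgn a ≠ sgn b then (1:ℝ) else 0) * |a| ^ q
      + 2 ^ (q - 1) * (if y ≠ sgn b then (1:ℝ) else 0) * |a - b| ^ q := by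
  have h2 : (1:ℝ) ≤ 2 ^ (q - 1) := one_le_pow₀ (by norm_num)
  have habsy : |y| = 1 := by rcases hy with h | h <;> simp [h]
  have hite : ∀ (c : Prop) [Decidable c], (0:ℝ) ≤ (if c then (1:ℝ) else 0) := by
    intro c _; split_ifs <;> norm_num
  have hterm2 : (0:ℝ) ≤ 2 ^ (q - 1) * (if y ≠ sgn b then (1:ℝ) else 0) * |a - b| ^ q := by
    apply mul_nonneg (mul_nonneg (by positivity) (hite _)) (by positivity)
  have hterm1 : (0:ℝ) ≤ 2 ^ (q - 1) * (if sgn a ≠ sgn b then (1:ℝ) else 0) * |a| ^ q := by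
    apply mul_nonneg (mul_nonneg (by positivity) (hite _)) (by positivity)
  by_cases hyb : y = sgn b
  · have hb0 : max (-y * b) 0 = 0 := by
      rw [max_eq_right]
      subst hyb; unfold sgn; split_ifs with h <;> nlinarith
    rw [hb0, sub_zero]
    by_cases hab : sgn a = sgn b
    · have ha0 : max (-y * a) 0 = 0 := by
        rw [max_eq_right]
        have : y = sgn a := hyb.trans hab.symm
        subst this; unfold sgn; split_ifs with h <;> nlinarith
      rw [ha0]
      simpa [zero_pow (by omega : q ≠ 0)] using add_nonneg hterm1 hterm2
    · have h1 : |max (-y * a) 0| ≤ |a| := by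
        rw [abs_of_nonneg (le_max_right _ _)]
        apply max_le _ (abs_nonneg a)
        calc -y * a ≤ |(-y) * a| := le_abs_self _
          _ = |a| := by rw [abs_mul, abs_neg, habsy, one_mul]
      calc |max (-y * a) 0| ^ q ≤ |a| ^ q := pow_le_pow_left₀ (abs_nonneg _) h1 q
        _ = 1 * |a| ^ q := (one_mul _).symm
        _ ≤ 2 ^ (q - 1) * (if sgn a ≠ sgn b then (1:ℝ) else 0) * |a| ^ q := by
            rw [if_pos hab, mul_one]
            exact mul_le_mul_of_nonneg_right h2 (by positivity)
        _ ≤ _ := le_add_of_nonneg_right hterm2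
  · have hlip : |max (-y * a) 0 - max (-y * b) 0| ≤ |a - b| := by
      calc |max (-y * a) 0 - max (-y * b) 0| ≤ |(-y * a) - (-y * b)| :=
            abs_max_sub_max_le_abs _ _ _
        _ = |(-y) * (a - b)| := by ring_nf
        _ = |a - b| := by rw [abs_mul, abs_neg, habsy, one_mul]
    calc |max (-y * a) 0 - max (-y * b) 0| ^ q ≤ |a - b| ^ q :=
          pow_le_pow_left₀ (abs_nonneg _) hlip q
      _ = 1 * |a - b| ^ q := (one_mul _).symm
      _ ≤ 2 ^ (q - 1) * (if y ≠ sgn b then (1:ℝ) else 0) * |a - b| ^ q := by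
          rw [if_pos hyb, mul_one]
          exact mul_le_mul_of_nonneg_right h2 (by positivity)
      _ ≤ _ := le_add_of_nonneg_left hterm1

lemma kernel_meas (d : ℕ) (p : ℝ → ℝ) (hp : Measurable p) (θ : EuclideanSpace ℝ (Fin d)) :
    Measurable (fun x : EuclideanSpace ℝ (Fin d) =>
      ENNReal.ofReal (p (inner ℝ x θ : ℝ)) • Measure.dirac (x, (1:ℝ))
        + ENNReal.ofReal (1 - p (inner ℝ x θ : ℝ)) • Measure.dirac (x, (-1:ℝ))) := by
  apply Measure.measurable_of_measurable_coe
  intro s hs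
  simp only [Measure.coe_add, Measure.coe_smul, Pi.add_apply, Pi.smul_apply, smul_eq_mul,
    Measure.dirac_apply' _ hs]
  have hpx : Measurable fun x : EuclideanSpace ℝ (Fin d) => (inner ℝ x θ : ℝ) :=
    (continuous_id.inner continuous_const).measurable
  apply Measurable.add
  · apply Measurable.mul
    · exact ENNReal.measurable_ofReal.comp (hp.comp hpx)
    · have : (fun x : EuclideanSpace ℝ (Fin d) =>
            s.indicator (1 : EuclideanSpace ℝ (Fin d) × ℝ → ENNReal) (x, (1:ℝ)))
          = ((fun x : EuclideanSpace ℝ (Fin d) => (x, (1:ℝ))) ⁻¹' s).indicator 1 := by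
        ext x; simp [Set.indicator, Set.mem_preimage]; rfl
      rw [this]
      exact measurable_const.indicator ((measurable_id.prodMk measurable_const) hs)
  · apply Measurable.mul
    · exact ENNReal.measurable_ofReal.comp ((measurable_const.sub hp).comp hpx)
    · have : (fun x : EuclideanSpace ℝ (Fin d) =>
            s.indicator (1 : EuclideanSpace ℝ (Fin d) × ℝ → ENNReal) (x, (-1:ℝ)))
          = ((fun x : EuclideanSpace ℝ (Fin d) => (x, (-1:ℝ))) ⁻¹' s).indicator 1 := by
        ext x; simp [Set.indicator, Set.mem_preimage]; rfl
      rw [this]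
      exact measurable_const.indicator ((measurable_id.prodMk measurable_const) hs)

lemma ae_pm (d : ℕ) (p : ℝ → ℝ) (hp : Measurable p) (θ : EuclideanSpace ℝ (Fin d)) :
    ∀ᵐ w ∂(binaryModel d p θ), w.2 = 1 ∨ w.2 = -1 := by
  rw [ae_iff]
  have hs : MeasurableSet {w : EuclideanSpace ℝ (Fin d) × ℝ | ¬(w.2 = 1 ∨ w.2 = -1)} := by
    apply MeasurableSet.compl
    exact (measurable_snd (measurableSet_singleton 1)).union
      (measurable_snd (measurableSet_singleton (-1)))
  rw [binaryModel, Measure.bind_apply hs (kernel_meas d p hp θ).aemeasurable]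
  have : ∀ x : EuclideanSpace ℝ (Fin d),
      (ENNReal.ofReal (p (inner ℝ x θ : ℝ)) • Measure.dirac (x, (1:ℝ))
        + ENNReal.ofReal (1 - p (inner ℝ x θ : ℝ)) • Measure.dirac (x, (-1:ℝ)))
        {w : EuclideanSpace ℝ (Fin d) × ℝ | ¬(w.2 = 1 ∨ w.2 = -1)} = 0 := by
    intro x
    simp only [Measure.coe_add, Measure.coe_smul, Pi.add_apply, Pi.smul_apply, smul_eq_mul,
      Measure.dirac_apply' _ hs]
    rw [Set.indicator_of_notMem (by simp), Set.indicator_of_notMem (by simp)]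
    simp
  simp only [this, lintegral_zero]

/-- Pointwise decomposition bound for the ReLU loss differences (used in the moment
bounds), holding almost surely under the model. -/
theorem stmt18 (d : ℕ) (θstar θ : EuclideanSpace ℝ (Fin d))
    (hθstar : ‖θstar‖ = 1) (hθ : ‖θ‖ = 1)
    (p : ℝ → ℝ) (hp : Measurable p) (hp01 : ∀ t, p t ∈ Set.Icc (0:ℝ) 1)
    (hsym : ∀ t, p (-t) = 1 - p t) (q : ℕ) (hq : 2 ≤ q) :
    ∀ᵐ w ∂(binaryModel d p θstar),
      |max (-w.2 * (inner ℝ w.1 θ : ℝ)) 0 - max (-w.2 * (inner ℝ w.1 θstar : ℝ)) 0| ^ q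
        ≤ 2 ^ (q - 1) * (if sgn (inner ℝ w.1 θ : ℝ) ≠ sgn (inner ℝ w.1 θstar : ℝ)
              then (1:ℝ) else 0) * |(inner ℝ w.1 θ : ℝ)| ^ q
          + 2 ^ (q - 1) * (if w.2 ≠ sgn (inner ℝ w.1 θstar : ℝ) then (1:ℝ) else 0)
              * |(inner ℝ w.1 (θ - θstar) : ℝ)| ^ q := by
  filter_upwards [ae_pm d p hp θstar] with w hw
  have hsub : (inner ℝ w.1 (θ - θstar) : ℝ) = (inner ℝ w.1 θ : ℝ) - (inner ℝ w.1 θstar : ℝ) :=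
    inner_sub_right _ _ _
  rw [hsub]
  exact key_pointwise w.2 _ _ hw q hq
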